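/- Every convex body K in ℝ^n can be approximated arbitrarily closely in the Hausdorff metric by polytopes P such that for every vector u in a given finite set M ⊂ S^{n−1}, the face F(P,u) is a centrally symmetric facet of P. -/

import Mathlib

open scoped RealInnerProductSpace Pointwise

section aux
variable {E : Type*} [NormedAddCommGroup E] [InnerProductSpace ℝ E]

lemma aux_isLinearMap (u : E) : IsLinearMap ℝ (fun x : E => ⟪x, u⟫) :=
  ⟨fun a b => inner_add_left a b u, fun c x => real_inner_smul_left x u c⟩

lemma aux_sSup_hull {s : Set E} {u : E} {c : ℝ} (hne : s.Nonempty)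
    (hle : ∀ x ∈ s, ⟪x, u⟫ ≤ c) (hmem : ∃ x ∈ s, ⟪x, u⟫ = c) :
    sSup ((fun y => ⟪y, u⟫) '' (convexHull ℝ s)) = c := by
  obtain ⟨x, hx, hxc⟩ := hmem
  have hsub : convexHull ℝ s ⊆ {y | ⟪y, u⟫ ≤ c} :=
    convexHull_min hle (convex_halfSpace_le (aux_isLinearMap u) c)
  apply le_antisymm
  · apply csSup_le (Set.Nonempty.image _ (hne.mono (subset_convexHull ℝ s)))
    rintro r ⟨y, hy, rfl⟩; exact hsub hy
  · exact le_csSup ⟨c, by rintro r ⟨y, hy, rfl⟩; exact hsub hy⟩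
      ⟨x, subset_convexHull ℝ s hx, hxc⟩

lemma aux_inner_lt_one {u v : E} (hu : ‖u‖ = 1) (hv : ‖v‖ = 1) (huv : u ≠ v) :
    ⟪v, u⟫ < 1 := by
  have hne0 : u - v ≠ 0 := sub_ne_zero.2 huv
  have h1 : ⟪u - v, u - v⟫ > 0 := by
    rw [real_inner_self_eq_norm_mul_norm]
    exact mul_pos (norm_pos_iff.2 hne0) (norm_pos_iff.2 hne0)
  have h2 : ⟪u - v, u - v⟫ = 2 - 2 * ⟪v, u⟫ := by
    rw [inner_sub_left, inner_sub_right, inner_sub_right, real_inner_self_eq_norm_mul_norm,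
      real_inner_self_eq_norm_mul_norm, hu, hv, real_inner_comm u v]
    ring
  linarith

lemma aux_orth_span [FiniteDimensional ℝ E] (W : Submodule ℝ E) :
    W = Submodule.span ℝ (Set.range (fun i => ((stdOrthonormalBasis ℝ W) i : E))) := by
  have htop := (stdOrthonormalBasis ℝ W).toBasis.span_eq
  have h2 : Submodule.map W.subtype
      (Submodule.span ℝ (Set.range ⇑(stdOrthonormalBasis ℝ W).toBasis)) = W := by
    rw [htop, Submodule.map_subtype_top]
  rw [Submodule.map_span] at h2
  have hfeq : (⇑W.subtype '' Set.range ⇑(stdOrthonormalBasis ℝ W).toBasis) =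
      Set.range (fun i => ((stdOrthonormalBasis ℝ W) i : E)) := by
    rw [← Set.range_comp]
    ext x
    simp [Function.comp]
  rw [hfeq] at h2
  exact h2.symm

end aux

variable {n : ℕ}

/-- The support set `F_K(u) = {x ∈ K : ⟪x,u⟫ = h_K(u)}`. -/
def supportSet (K : Set (EuclideanSpace ℝ (Fin n))) (u : EuclideanSpace ℝ (Fin n)) :
    Set (EuclideanSpace ℝ (Fin n)) :=
  {x ∈ K | ⟪x, u⟫ = sSup ((fun y => ⟪y, u⟫) '' K)}

/-- Every convex body `K` in `ℝⁿ` can be approximated arbitrarily closely in the Hausdorff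
metric by polytopes `P` such that for every `u` in a given finite set `M ⊆ S^{n-1}`, the face
`F(P,u)` is a centrally symmetric facet (`(n-1)`-dimensional face) of `P`. -/
theorem stmt15 (K : ConvexBody (EuclideanSpace ℝ (Fin n)))
    (M : Finset (EuclideanSpace ℝ (Fin n)))
    (hM : ∀ u ∈ M, ‖u‖ = 1) (ε : ℝ) (hε : 0 < ε) :
    ∃ P : Set (EuclideanSpace ℝ (Fin n)),
      (∃ S : Finset (EuclideanSpace ℝ (Fin n)), P = convexHull ℝ (S : Set _)) ∧
      P.Nonempty ∧
      Metric.hausdorffDist P (K : Set (EuclideanSpace ℝ (Fin n))) < ε ∧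
      ∀ u ∈ M,
        Module.finrank ℝ (vectorSpan ℝ (supportSet P u)) = n - 1 ∧
        ∃ c : EuclideanSpace ℝ (Fin n), supportSet P u = (fun x => c - x) '' supportSet P u := by
  classical
  -- finite net inside K
  obtain ⟨t, htK, htfin, htcov⟩ :=
    Metric.finite_approx_of_totallyBounded K.isCompact.totallyBounded (ε/4) (by positivity)
  obtain ⟨x0, hx0⟩ := K.nonempty
  have hx0' := htcov hx0
  simp only [Set.mem_iUnion] at hx0'
  obtain ⟨z0, hz0t, _⟩ := hx0'
  set net : Finset (EuclideanSpace ℝ (Fin n)) := htfin.toFinset with hnet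
  have hnetcoe : (net : Set (EuclideanSpace ℝ (Fin n))) = t := htfin.coe_toFinset
  have hnetne : net.Nonempty := ⟨z0, by rw [← Finset.mem_coe, hnetcoe]; exact hz0t⟩
  -- the gap η
  obtain ⟨η, hη0, hη1, hηlt⟩ : ∃ η : ℝ, 0 < η ∧ η ≤ 1 ∧
      ∀ u ∈ M, ∀ v ∈ M, u ≠ v → ⟪v, u⟫ ≤ 1 - η := by
    by_cases hMM : ((M ×ˢ M).filter (fun p : (EuclideanSpace ℝ (Fin n)) × (EuclideanSpace ℝ (Fin n)) => p.1 ≠ p.2)).Nonempty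
    · obtain ⟨p, hp, hmin⟩ := Finset.exists_min_image _ (fun p : (EuclideanSpace ℝ (Fin n)) × (EuclideanSpace ℝ (Fin n)) => 1 - ⟪p.2, p.1⟫) hMM
      simp only [Finset.mem_filter, Finset.mem_product] at hp
      obtain ⟨⟨hp1, hp2⟩, hpne⟩ := hp
      have hlt : ⟪p.2, p.1⟫ < 1 := aux_inner_lt_one (hM _ hp1) (hM _ hp2) hpne
      refine ⟨min 1 (1 - ⟪p.2, p.1⟫), lt_min one_pos (by linarith), min_le_left _ _, ?_⟩
      intro u hu v hv huv
      have h1 := hmin (u, v) (by simp only [Finset.mem_filter, Finset.mem_product]; exact ⟨⟨hu, hv⟩, huv⟩)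
      have h2 := min_le_right (1 : ℝ) (1 - ⟪p.2, p.1⟫)
      simp only at h1
      linarith
    · refine ⟨1, one_pos, le_refl 1, fun u hu v hv huv => ?_⟩
      exact absurd ⟨(u, v), by simp only [Finset.mem_filter, Finset.mem_product]; exact ⟨⟨hu, hv⟩, huv⟩⟩ hMM
  set δ : ℝ := ε/8 with hδ
  have hδ0 : 0 < δ := by positivity
  set ρ : ℝ := δ * η / 2 with hρ
  have hρ0 : 0 < ρ := by positivity
  have hρδ : ρ ≤ δ / 2 := by
    rw [hρ]
    nlinarith
  -- maximizers over the net
  have hmaxex : ∀ u : (EuclideanSpace ℝ (Fin n)), ∃ x ∈ net, ∀ y ∈ net, ⟪y, u⟫ ≤ ⟪x, u⟫ := fun u =>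
    net.exists_max_image (fun y => ⟪y, u⟫) hnetne
  choose xm hxm hxmax using hmaxex
  -- vertex sets
  set m : (EuclideanSpace ℝ (Fin n)) → (EuclideanSpace ℝ (Fin n)) := fun u => xm u + δ • u with hm
  set A : (EuclideanSpace ℝ (Fin n)) → Finset (EuclideanSpace ℝ (Fin n)) := fun u =>
    insert (m u)
      (Finset.image
        (fun p : Fin (Module.finrank ℝ ((ℝ ∙ u)ᗮ : Submodule ℝ (EuclideanSpace ℝ (Fin n)))) × Bool =>
          m u + (if p.2 then ρ else -ρ) • ((stdOrthonormalBasis ℝ ((ℝ ∙ u)ᗮ : Submodule ℝ (EuclideanSpace ℝ (Fin n)))) p.1 : (EuclideanSpace ℝ (Fin n))))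
        Finset.univ) with hA
  set V : Finset (EuclideanSpace ℝ (Fin n)) := net ∪ M.biUnion A with hV
  have hnetV : net ⊆ V := Finset.subset_union_left
  set P : Set (EuclideanSpace ℝ (Fin n)) := convexHull ℝ (V : Set (EuclideanSpace ℝ (Fin n))) with hP
  -- structure of A v
  have hAform : ∀ v : (EuclideanSpace ℝ (Fin n)), ∀ w ∈ A v, ∃ s : (EuclideanSpace ℝ (Fin n)),
      s ∈ ((ℝ ∙ v)ᗮ : Submodule ℝ (EuclideanSpace ℝ (Fin n))) ∧ ‖s‖ ≤ ρ ∧ w = m v + s := by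
    intro v w hw
    rcases Finset.mem_insert.1 hw with h | h
    · exact ⟨0, Submodule.zero_mem _, by simp [hρ0.le], by simp [h]⟩
    · obtain ⟨p, -, rfl⟩ := Finset.mem_image.1 h
      refine ⟨(if p.2 then ρ else -ρ) • _, Submodule.smul_mem _ _ (SetLike.coe_mem _), ?_, rfl⟩
      rw [norm_smul]
      have hb : ‖((stdOrthonormalBasis ℝ ((ℝ ∙ v)ᗮ : Submodule ℝ (EuclideanSpace ℝ (Fin n)))) p.1 : (EuclideanSpace ℝ (Fin n)))‖ = 1 := by
        have := (stdOrthonormalBasis ℝ ((ℝ ∙ v)ᗮ : Submodule ℝ (EuclideanSpace ℝ (Fin n)))).orthonormal.1 p.1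
        exact this
      rw [hb, mul_one]
      cases p.2 <;> simp [abs_of_pos hρ0]
  have hmA : ∀ v : (EuclideanSpace ℝ (Fin n)), m v ∈ A v := fun v => Finset.mem_insert_self _ _
  -- heights
  have hheight : ∀ u ∈ M, ∀ w ∈ A u, ⟪w, u⟫ = ⟪m u, u⟫ := by
    intro u hu w hw
    obtain ⟨s, hsW, -, rfl⟩ := hAform u w hw
    have hs0 : ⟪s, u⟫ = 0 := by
      rw [Submodule.mem_orthogonal] at hsW
      rw [real_inner_comm]
      exact hsW u (Submodule.mem_span_singleton_self u)
    rw [inner_add_left, hs0, add_zero]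
  have hmheight : ∀ u ∈ M, ⟪m u, u⟫ = ⟪xm u, u⟫ + δ := by
    intro u hu
    have huu : ⟪u, u⟫ = 1 := by
      rw [real_inner_self_eq_norm_mul_norm, hM u hu]; ring
    simp only [hm, inner_add_left, real_inner_smul_left, huu, mul_one]
  have hstrict : ∀ u ∈ M, ∀ w : (EuclideanSpace ℝ (Fin n)),
      (w ∈ net ∨ ∃ v ∈ M, v ≠ u ∧ w ∈ A v) → ⟪w, u⟫ < ⟪m u, u⟫ := by
    intro u hu w hcase
    rw [hmheight u hu]
    rcases hcase with h | ⟨v, hv, hvu, hwA⟩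
    · have := hxmax u w h
      linarith
    · obtain ⟨s, hsW, hsρ, rfl⟩ := hAform v _ hwA
      have h1 : ⟪xm v, u⟫ ≤ ⟪xm u, u⟫ := hxmax u (xm v) (hxm v)
      have h2 : ⟪v, u⟫ ≤ 1 - η := hηlt u hu v hv (fun h => hvu h.symm)
      have h3 : ⟪s, u⟫ ≤ ρ := by
        have := real_inner_le_norm s u
        rw [hM u hu, mul_one] at this
        linarith
      have hval : ⟪m v + s, u⟫ = ⟪xm v, u⟫ + δ * ⟪v, u⟫ + ⟪s, u⟫ := by
        simp only [hm, inner_add_left, real_inner_smul_left]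
      rw [hval]
      nlinarith
  -- the support function value
  have hmV : ∀ u ∈ M, (m u : (EuclideanSpace ℝ (Fin n))) ∈ (V : Set (EuclideanSpace ℝ (Fin n))) := fun u hu =>
    Finset.mem_coe.2 (Finset.mem_union_right _ (Finset.mem_biUnion.2 ⟨u, hu, hmA u⟩))
  have hVle : ∀ u ∈ M, ∀ x ∈ (V : Set (EuclideanSpace ℝ (Fin n))), ⟪x, u⟫ ≤ ⟪m u, u⟫ := by
    intro u hu x hx
    rcases Finset.mem_union.1 (Finset.mem_coe.1 hx) with h | h
    · exact (hstrict u hu x (Or.inl h)).le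
    · obtain ⟨v, hv, hxA⟩ := Finset.mem_biUnion.1 h
      by_cases hvu : v = u
      · subst hvu; exact (hheight v hv x hxA).le
      · exact (hstrict u hu x (Or.inr ⟨v, hv, hvu, hxA⟩)).le
  have hsup : ∀ u ∈ M, sSup ((fun y => ⟪y, u⟫) '' P) = ⟪m u, u⟫ := by
    intro u hu
    exact aux_sSup_hull ⟨m u, hmV u hu⟩ (hVle u hu) ⟨m u, hmV u hu, rfl⟩
  -- the support set is the cap
  have hface : ∀ u ∈ M, supportSet P u = convexHull ℝ ((A u : Set (EuclideanSpace ℝ (Fin n)))) := by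
    intro u hu
    have hAne : ((A u : Set (EuclideanSpace ℝ (Fin n)))).Nonempty := ⟨m u, hmA u⟩
    set B : Set (EuclideanSpace ℝ (Fin n)) := (net : Set (EuclideanSpace ℝ (Fin n))) ∪ ⋃ v ∈ M.erase u, (A v : Set (EuclideanSpace ℝ (Fin n))) with hB
    have hBne : B.Nonempty := ⟨z0, Or.inl (by exact_mod_cast htfin.mem_toFinset.2 hz0t)⟩
    have hVsplit : (V : Set (EuclideanSpace ℝ (Fin n))) = (A u : Set (EuclideanSpace ℝ (Fin n))) ∪ B := by
      ext w
      simp only [hB, hV, Finset.coe_union, Set.mem_union, Finset.mem_coe, Finset.mem_biUnion,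
        Set.mem_iUnion, Finset.mem_erase, exists_prop]
      constructor
      · rintro (h | ⟨v, hv, hw⟩)
        · exact Or.inr (Or.inl h)
        · by_cases hvu : v = u
          · subst hvu; exact Or.inl hw
          · exact Or.inr (Or.inr ⟨v, ⟨hvu, hv⟩, hw⟩)
      · rintro (h | h | ⟨v, ⟨hvu, hv⟩, hw⟩)
        · exact Or.inr ⟨u, hu, h⟩
        · exact Or.inl h
        · exact Or.inr ⟨v, hv, hw⟩
    have hBlt : ∀ w ∈ B, ⟪w, u⟫ < ⟪m u, u⟫ := by
      rintro w (h | h)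
      · exact hstrict u hu w (Or.inl (Finset.mem_coe.1 h))
      · simp only [Set.mem_iUnion, exists_prop] at h
        obtain ⟨v, hv, hw⟩ := h
        exact hstrict u hu w
          (Or.inr ⟨v, (Finset.mem_erase.1 hv).2, (Finset.mem_erase.1 hv).1, hw⟩)
    have hhullA : convexHull ℝ (A u : Set (EuclideanSpace ℝ (Fin n))) ⊆ {x | ⟪x, u⟫ = ⟪m u, u⟫} :=
      convexHull_min (fun w hw => hheight u hu w hw) (convex_hyperplane (aux_isLinearMap u) _)
    have hhullB : convexHull ℝ B ⊆ {x | ⟪x, u⟫ < ⟪m u, u⟫} :=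
      convexHull_min hBlt (convex_halfSpace_lt (aux_isLinearMap u) _)
    apply Set.Subset.antisymm
    · rintro x ⟨hxP, hxh⟩
      rw [hsup u hu] at hxh
      rw [hP, hVsplit, convexHull_union hAne hBne, mem_convexJoin] at hxP
      obtain ⟨a, ha, b, hb, hseg⟩ := hxP
      obtain ⟨α, β, hα, hβ, hαβ, hx⟩ := hseg
      have hA' : ⟪a, u⟫ = ⟪m u, u⟫ := hhullA ha
      have hB' : ⟪b, u⟫ < ⟪m u, u⟫ := hhullB hb
      have hxval : α * ⟪a, u⟫ + β * ⟪b, u⟫ = ⟪m u, u⟫ := by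
        rw [← hxh, ← hx, inner_add_left, real_inner_smul_left, real_inner_smul_left]
      have hα' : α = 1 - β := by linarith
      have key : β * (⟪m u, u⟫ - ⟪b, u⟫) = 0 := by
        rw [hα', hA'] at hxval
        ring_nf at hxval ⊢
        linarith
      have hβ0 : β = 0 := by
        rcases mul_eq_zero.1 key with h | h
        · exact h
        · linarith
      have hα1 : α = 1 := by linarith
      rw [← hx, hβ0, hα1]
      simpa using ha
    · intro x hx
      refine ⟨convexHull_mono (by rw [hVsplit]; exact Set.subset_union_left) hx, ?_⟩
      rw [hsup u hu]
      exact hhullA hx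
  refine ⟨P, ⟨V, rfl⟩, ⟨z0, subset_convexHull ℝ _ (hnetV (htfin.mem_toFinset.2 hz0t))⟩, ?_, ?_⟩
  · -- Hausdorff distance
    have hVsubset : (V : Set (EuclideanSpace ℝ (Fin n))) ⊆ (K : Set (EuclideanSpace ℝ (Fin n))) + Metric.closedBall (0 : (EuclideanSpace ℝ (Fin n))) (ε/4) := by
      intro w hw
      rcases Finset.mem_union.1 (Finset.mem_coe.1 hw) with h | h
      · exact ⟨w, htK (htfin.mem_toFinset.1 h), 0,
          Metric.mem_closedBall_self (by positivity), by simp⟩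
      · obtain ⟨v, hv, hwA⟩ := Finset.mem_biUnion.1 h
        obtain ⟨s, -, hsρ, rfl⟩ := hAform v _ hwA
        refine ⟨xm v, htK (htfin.mem_toFinset.1 (hxm v)), δ • v + s, ?_, ?_⟩
        · rw [Metric.mem_closedBall, dist_zero_right]
          have hns : ‖δ • v + s‖ ≤ δ * ‖v‖ + ρ := by
            refine le_trans (norm_add_le _ _) ?_
            rw [norm_smul, Real.norm_eq_abs, abs_of_pos hδ0]
            linarith
          rw [hM v hv, mul_one] at hns
          rw [hδ] at hns hρδ ⊢
          linarith
        · simp only [hm]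
          abel
    have h1 : ∀ x ∈ P, ∃ y ∈ (K : Set (EuclideanSpace ℝ (Fin n))), dist x y ≤ ε/4 := by
      intro x hx
      have hx' := convexHull_min hVsubset (K.convex.add (convex_closedBall _ _)) hx
      obtain ⟨k, hk, b, hb, rfl⟩ := hx'
      refine ⟨k, hk, ?_⟩
      rw [dist_eq_norm, add_sub_cancel_left]
      simpa [dist_zero_right] using Metric.mem_closedBall.1 hb
    have h2 : ∀ y ∈ (K : Set (EuclideanSpace ℝ (Fin n))), ∃ x ∈ P, dist y x ≤ ε/4 := by
      intro y hy
      have hy' := htcov hy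
      simp only [Set.mem_iUnion, exists_prop] at hy'
      obtain ⟨z, hz, hyz⟩ := hy'
      exact ⟨z, subset_convexHull ℝ _ (hnetV (htfin.mem_toFinset.2 hz)),
        (Metric.mem_ball.1 hyz).le⟩
    have hhd : Metric.hausdorffDist P (K : Set (EuclideanSpace ℝ (Fin n))) ≤ ε/4 :=
      Metric.hausdorffDist_le_of_mem_dist (by positivity) h1 h2
    linarith
  · intro u hu
    have hu1 : ‖u‖ = 1 := hM u hu
    have hu0 : u ≠ 0 := by intro h; rw [h] at hu1; simp at hu1
    constructor
    · -- finrank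
      have hW : vectorSpan ℝ (supportSet P u) = ((ℝ ∙ u)ᗮ : Submodule ℝ (EuclideanSpace ℝ (Fin n))) := by
        rw [hface u hu, ← direction_affineSpan, affineSpan_convexHull, direction_affineSpan]
        apply le_antisymm
        · rw [vectorSpan_def]
          apply Submodule.span_le.2
          rintro x hx
          obtain ⟨a, ha, b, hb, rfl⟩ := Set.mem_vsub.1 hx
          obtain ⟨s1, hs1, -, rfl⟩ := hAform u a ha
          obtain ⟨s2, hs2, -, rfl⟩ := hAform u b hb
          have heq : (m u + s1) -ᵥ (m u + s2) = s1 - s2 := by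
            rw [vsub_eq_sub]; abel
          rw [heq]
          exact Submodule.sub_mem _ hs1 hs2
        · have hbmem : ∀ i, ((stdOrthonormalBasis ℝ ((ℝ ∙ u)ᗮ : Submodule ℝ (EuclideanSpace ℝ (Fin n)))) i : (EuclideanSpace ℝ (Fin n))) ∈
              vectorSpan ℝ (A u : Set (EuclideanSpace ℝ (Fin n))) := by
            intro i
            set e : (EuclideanSpace ℝ (Fin n)) := ((stdOrthonormalBasis ℝ ((ℝ ∙ u)ᗮ : Submodule ℝ (EuclideanSpace ℝ (Fin n)))) i : (EuclideanSpace ℝ (Fin n))) with he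
            have hm1 : m u + ρ • e ∈ (A u : Set (EuclideanSpace ℝ (Fin n))) := by
              refine Finset.mem_coe.2 (Finset.mem_insert_of_mem (Finset.mem_image.2
                ⟨(i, true), Finset.mem_univ _, by simp [he]⟩))
            have hm2 : m u + (-ρ) • e ∈ (A u : Set (EuclideanSpace ℝ (Fin n))) := by
              refine Finset.mem_coe.2 (Finset.mem_insert_of_mem (Finset.mem_image.2
                ⟨(i, false), Finset.mem_univ _, by simp [he]⟩))
            have hd := vsub_mem_vectorSpan ℝ hm1 hm2
            have heq : (m u + ρ • e) -ᵥ (m u + (-ρ) • e) = (2*ρ) • e := by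
              rw [vsub_eq_sub, two_mul, add_smul, neg_smul]
              abel
            rw [heq] at hd
            have := Submodule.smul_mem (vectorSpan ℝ (A u : Set (EuclideanSpace ℝ (Fin n)))) (2*ρ)⁻¹ hd
            rwa [smul_smul, inv_mul_cancel₀ (by positivity), one_smul] at this
          have hWspan := aux_orth_span ((ℝ ∙ u)ᗮ : Submodule ℝ (EuclideanSpace ℝ (Fin n)))
          rw [hWspan]
          apply Submodule.span_le.2
          rintro _ ⟨i, rfl⟩
          exact hbmem i
      rw [hW]
      have h1 : Module.finrank ℝ ((ℝ ∙ u) : Submodule ℝ (EuclideanSpace ℝ (Fin n))) = 1 := finrank_span_singleton hu0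
      have h2 := Submodule.finrank_add_finrank_orthogonal (K := ((ℝ ∙ u) : Submodule ℝ (EuclideanSpace ℝ (Fin n))))
      have h3 : Module.finrank ℝ (EuclideanSpace ℝ (Fin n)) = n := finrank_euclideanSpace_fin
      rw [h1, h3] at h2
      omega
    · -- central symmetry
      refine ⟨m u + m u, ?_⟩
      rw [hface u hu]
      have hsymA : ∀ w ∈ (A u : Set (EuclideanSpace ℝ (Fin n))), (m u + m u) - w ∈ (A u : Set (EuclideanSpace ℝ (Fin n))) := by
        intro w hw
        rcases Finset.mem_insert.1 (Finset.mem_coe.1 hw) with h | h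
        · rw [h]
          have : m u + m u - m u = m u := by abel
          rw [this]
          exact Finset.mem_coe.2 (hmA u)
        · obtain ⟨p, -, rfl⟩ := Finset.mem_image.1 h
          refine Finset.mem_coe.2 (Finset.mem_insert_of_mem (Finset.mem_image.2
            ⟨(p.1, !p.2), Finset.mem_univ _, ?_⟩))
          cases hb : p.2 <;> simp [hb] <;> abel
      have himg : (fun x => (m u + m u) - x) '' (A u : Set (EuclideanSpace ℝ (Fin n))) = (A u : Set (EuclideanSpace ℝ (Fin n))) := by
        apply Set.Subset.antisymm
        · rintro _ ⟨w, hw, rfl⟩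
          exact hsymA w hw
        · intro w hw
          exact ⟨(m u + m u) - w, hsymA w hw, sub_sub_cancel _ _⟩
      have hfun : (fun x : (EuclideanSpace ℝ (Fin n)) => (m u + m u) - x) =
          ⇑((AffineEquiv.pointReflection ℝ (m u)).toAffineMap) := by
        funext x
        simp [AffineEquiv.pointReflection_apply, Equiv.pointReflection_apply, vsub_eq_sub, vadd_eq_add]
        abel
      rw [hfun, AffineMap.image_convexHull, ← hfun, himg]
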